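/- Let A : Matrix (Fin n) (Fin n) ℝ with n ≥ 1 and suppose the undirected graph G(A) is connected (as a simple graph on Fin n). Then for every vertex i that is not the largest vertex of Fin n, there exists j with i < j and F i j. (Hence the elimination-tree parent of every non-root vertex is well defined and the parent relation defines a tree rooted at the largest vertex.) -/

import Mathlib

/-- The undirected graph `G(A)` of a square real matrix `A`: `i` is adjacent to `j` iff
`i ≠ j` and (`A i j ≠ 0` or `A j i ≠ 0`). -/
def graphOf {n : ℕ} (A : Matrix (Fin n) (Fin n) ℝ) : SimpleGraph (Fin n) where
  Adj i j := i ≠ j ∧ (A i j ≠ 0 ∨ A j i ≠ 0)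
  symm := by
    constructor
    intro i j h
    exact ⟨h.1.symm, h.2.symm⟩
  loopless := by
    constructor
    intro i h
    exact h.1 rfl

/-- The fill relation of `A`: `fill A i j` iff `i ≠ j` and there is a walk from `i` to
`j` in `G(A)` all of whose interior vertices `u` satisfy `u < i` and `u < j`. -/
def fill {n : ℕ} (A : Matrix (Fin n) (Fin n) ℝ) (i j : Fin n) : Prop :=
  i ≠ j ∧ ∃ w : (graphOf A).Walk i j, ∀ u ∈ w.support.tail.dropLast, u < i ∧ u < j

/-- if `n ≥ 1` and `G(A)` is connected, then every vertex `i` that is not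
the largest vertex of `Fin n` has some `j` with `i < j` and `fill A i j` (so the
elimination-tree parent of every non-root vertex is well defined). -/
private lemma aux_walk {n : ℕ} (A : Matrix (Fin n) (Fin n) ℝ) (i : Fin n) :
    ∀ {v t : Fin n}, (w : (graphOf A).Walk v t) → v < i → i < t → i ∉ w.support →
    ∃ j, i < j ∧ ∃ p : (graphOf A).Walk v j, ∀ u ∈ p.support.dropLast, u < i := by
  intro v t w
  induction w with
  | nil => intro hv ht _; exact absurd (hv.trans ht) (lt_irrefl _)
  | @cons v u t h q ih =>
    intro hv ht hi
    by_cases hu : i < u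
    · refine ⟨u, hu, SimpleGraph.Walk.cons h .nil, ?_⟩
      intro x hx
      simp at hx
      simpa [hx] using hv
    · have hune : u ≠ i := by
        intro e
        exact hi (by rw [SimpleGraph.Walk.support_cons]; exact List.mem_cons_of_mem _ (e ▸ q.start_mem_support))
      have hui : u < i := lt_of_le_of_ne (not_lt.mp hu) hune
      have hi' : i ∉ q.support := fun m => hi (by simp [m])
      obtain ⟨j, hj, p, hp⟩ := ih hui ht hi'
      refine ⟨j, hj, .cons h p, ?_⟩
      intro x hx
      rw [SimpleGraph.Walk.support_cons,
        List.dropLast_cons_of_ne_nil p.support_ne_nil] at hx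
      rcases List.mem_cons.mp hx with hx | hx
      · exact hx ▸ hv
      · exact hp x hx

theorem parent_exists_of_connected {n : ℕ} (A : Matrix (Fin n) (Fin n) ℝ) (hn : 1 ≤ n)
    (hconn : (graphOf A).Connected) (i : Fin n) (hi : ¬ IsMax i) :
    ∃ j : Fin n, i < j ∧ fill A i j := by
  obtain ⟨t, ht⟩ := not_isMax_iff.mp hi
  obtain ⟨w⟩ := hconn.preconnected i t
  obtain ⟨pw, hpw⟩ := w.toPath
  clear w
  revert hpw
  cases pw with
  | nil => intro _; exact absurd ht (lt_irrefl _)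
  | @cons _ v _ h q =>
    intro hpw
    rw [SimpleGraph.Walk.cons_isPath_iff] at hpw
    by_cases hv : i < v
    · refine ⟨v, hv, ne_of_lt hv, SimpleGraph.Walk.cons h .nil, ?_⟩
      intro u hu
      simp at hu
    · have hvne : v ≠ i := h.1.symm
      have hvi : v < i := lt_of_le_of_ne (not_lt.mp hv) hvne
      obtain ⟨j, hj, p, hp⟩ := aux_walk A i q hvi ht hpw.2
      refine ⟨j, hj, ne_of_lt hj, .cons h p, ?_⟩
      intro u hu
      rw [SimpleGraph.Walk.support_cons, List.tail_cons] at hu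
      exact ⟨hp u hu, (hp u hu).trans hj⟩
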